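/- Let k be a finite field and d ≥ 2 an integer. The set of column-finite d-automatic ℕ × ℕ matrices over k is a k-subalgebra of the algebra of column-finite matrices: it contains the identity matrix and is closed under scalar multiplication, addition, and matrix multiplication. -/
import Mathlib


/-- A matrix `A : ℕ × ℕ → k` is column-finite if every column has finitely many
nonzero entries. -/
def ColumnFinite {k : Type*} [Zero k] (A : ℕ → ℕ → k) : Prop :=
  ∀ j : ℕ, {i : ℕ | A i j ≠ 0}.Finite

/-- The `(i,j)` `d`-decimation of a matrix: `Ξ_d(A)_{ij}(r,s) = A (i + d·r) (j + d·s)`. -/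
def matDecimation {k : Type*} (d i j : ℕ) (A : ℕ → ℕ → k) : ℕ → ℕ → k :=
  fun r s => A (i + d * r) (j + d * s)

/-- A matrix is `d`-automatic if it belongs to a finite set of matrices closed under
taking all `d`-decimations. -/
def MatIsAutomatic {k : Type*} (d : ℕ) (A : ℕ → ℕ → k) : Prop :=
  ∃ S : Set (ℕ → ℕ → k), S.Finite ∧ A ∈ S ∧
    ∀ B ∈ S, ∀ i < d, ∀ j < d, matDecimation d i j B ∈ S

/-- Product of `ℕ × ℕ` matrices, using `finsum` (a finite sum whenever the matrices are
column-finite). -/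
noncomputable def matProd {k : Type*} [Field k] (A B : ℕ → ℕ → k) : ℕ → ℕ → k :=
  fun i j => ∑ᶠ r : ℕ, A i r * B r j

section Helpers

variable {k : Type*}

/-- Decimation preserves column-finiteness. -/
lemma colFin_dec [Zero k] {d : ℕ} (hd : 0 < d) (i j : ℕ) {A : ℕ → ℕ → k}
    (hA : ColumnFinite A) : ColumnFinite (matDecimation d i j A) := by
  intro s
  have hsub : {r | matDecimation d i j A r s ≠ 0} ⊆
      (fun r => i + d * r) ⁻¹' {t | A t (j + d * s) ≠ 0} := fun r hr => hr
  refine Set.Finite.subset ((hA (j + d * s)).preimage ?_) hsub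
  intro a _ b _ h
  exact Nat.eq_of_mul_eq_mul_left hd (Nat.add_left_cancel h)

/-- One decimation step. -/
def MatStep (d : ℕ) (X Y : ℕ → ℕ → k) : Prop :=
  ∃ i < d, ∃ j < d, Y = matDecimation d i j X

/-- The decimation closure of a matrix. -/
def matCl (d : ℕ) (A : ℕ → ℕ → k) : Set (ℕ → ℕ → k) :=
  {B | Relation.ReflTransGen (MatStep d) A B}

lemma self_mem_matCl {d : ℕ} (A : ℕ → ℕ → k) : A ∈ matCl d A := Relation.ReflTransGen.refl

lemma matCl_closed {d : ℕ} {A B : ℕ → ℕ → k} (hB : B ∈ matCl d A) {i j : ℕ}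
    (hi : i < d) (hj : j < d) : matDecimation d i j B ∈ matCl d A :=
  hB.tail ⟨i, hi, j, hj, rfl⟩

lemma matCl_finite {d : ℕ} {A : ℕ → ℕ → k} (hA : MatIsAutomatic d A) :
    (matCl d A).Finite := by
  obtain ⟨S, hSfin, hAS, hclosed⟩ := hA
  refine hSfin.subset ?_
  intro B hB
  induction hB with
  | refl => exact hAS
  | tail _ h2 ih =>
    obtain ⟨i, hi, j, hj, rfl⟩ := h2
    exact hclosed _ ih i hi j hj

lemma matCl_colFin [Zero k] {d : ℕ} (hd : 0 < d) {A : ℕ → ℕ → k} (hA : ColumnFinite A)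
    {B : ℕ → ℕ → k} (hB : B ∈ matCl d A) : ColumnFinite B := by
  induction hB with
  | refl => exact hA
  | tail _ h2 ih =>
    obtain ⟨i, hi, j, hj, rfl⟩ := h2
    exact colFin_dec hd i j ih

/-- Splitting a finsum over ℕ along residues mod `d`. -/
lemma finsum_split {M : Type*} [AddCommMonoid M] {d : ℕ} (hd : 0 < d) (f : ℕ → M)
    (hf : (Function.support f).Finite) :
    ∑ᶠ t, f t = ∑ m ∈ Finset.range d, ∑ᶠ u, f (m + d * u) := by
  set N : ℕ := (hf.toFinset.sup id) + 1 with hN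
  have hbound : ∀ t, f t ≠ 0 → t < d * N := by
    intro t ht
    have h1 : t ≤ hf.toFinset.sup id := Finset.le_sup (f := id) (hf.mem_toFinset.2 ht)
    have : t < N := by omega
    calc t < N := this
    _ ≤ d * N := Nat.le_mul_of_pos_left N hd
  have h1 : ∑ᶠ t, f t = ∑ t ∈ Finset.range (d * N), f t := by
    refine finsum_eq_sum_of_support_subset f ?_
    intro t ht
    simpa using hbound t ht
  have h2 : ∑ t ∈ Finset.range (d * N), f t =
      ∑ p ∈ Finset.range d ×ˢ Finset.range N, f (p.1 + d * p.2) := by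
    refine Finset.sum_nbij' (fun t => (t % d, t / d)) (fun p => p.1 + d * p.2) ?_ ?_ ?_ ?_ ?_
    · intro t ht
      simp only [Finset.mem_range] at ht
      simp only [Finset.mem_product, Finset.mem_range]
      exact ⟨Nat.mod_lt t hd, Nat.div_lt_of_lt_mul (by omega)⟩
    · intro p hp
      simp only [Finset.mem_product, Finset.mem_range] at hp
      simp only [Finset.mem_range]
      calc p.1 + d * p.2 < d + d * p.2 := by omega
      _ ≤ d * N := by
        have : p.2 + 1 ≤ N := hp.2
        calc d + d * p.2 = d * (p.2 + 1) := by ring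
        _ ≤ d * N := Nat.mul_le_mul_left d this
    · intro t _
      exact Nat.mod_add_div t d
    · intro p hp
      simp only [Finset.mem_product, Finset.mem_range] at hp
      have h1 : (p.1 + d * p.2) % d = p.1 := by
        rw [Nat.add_mul_mod_self_left, Nat.mod_eq_of_lt hp.1]
      have h2 : (p.1 + d * p.2) / d = p.2 := by
        rw [Nat.add_mul_div_left _ _ hd, Nat.div_eq_of_lt hp.1, Nat.zero_add]
      simp [h1, h2]
    · intro t _
      congr 1
      exact (Nat.mod_add_div t d).symm
  have h3 : ∀ m ∈ Finset.range d, ∑ᶠ u, f (m + d * u) = ∑ u ∈ Finset.range N, f (m + d * u) := by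
    intro m _
    refine finsum_eq_sum_of_support_subset _ ?_
    intro u hu
    have := hbound _ hu
    simp only [Finset.coe_range, Set.mem_Iio]
    by_contra h
    push_neg at h
    have : d * N ≤ d * u := Nat.mul_le_mul_left d h
    omega
  rw [h1, h2, Finset.sum_product]
  exact Finset.sum_congr rfl fun m hm => ((h3 m hm).symm)

end Helpers

section Helpers2

variable {k : Type*} [Field k]

lemma matProd_support_sub (A B : ℕ → ℕ → k) (i j : ℕ) :
    Function.support (fun t => A i t * B t j) ⊆ {t | B t j ≠ 0} := by
  intro t ht
  simp only [Function.mem_support] at ht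
  intro h
  exact ht (by rw [h, mul_zero])

lemma matProd_colFin {A B : ℕ → ℕ → k} (hA : ColumnFinite A) (hB : ColumnFinite B) :
    ColumnFinite (matProd A B) := by
  intro j
  have hfin : (⋃ r ∈ (hB j).toFinset, {i | A i r ≠ 0}).Finite :=
    Set.Finite.biUnion (Set.finite_mem_finset _) (fun r _ => hA r)
  refine hfin.subset ?_
  intro i hi
  by_contra hnot
  apply hi
  show ∑ᶠ r, A i r * B r j = 0
  refine finsum_eq_zero_of_forall_eq_zero ?_
  intro r
  by_cases hr : B r j = 0
  · rw [hr, mul_zero]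
  · have hmem : r ∈ (hB j).toFinset := (Set.Finite.mem_toFinset _).2 hr
    have : A i r = 0 := by
      by_contra hA0
      exact hnot (Set.mem_biUnion hmem (show i ∈ {i | A i r ≠ 0} from hA0))
    rw [this, zero_mul]

/-- Decimation of a product splits as a sum of products of decimations. -/
lemma dec_matProd {d : ℕ} (hd : 0 < d) {A B : ℕ → ℕ → k} (hB : ColumnFinite B)
    (i j r s : ℕ) :
    matProd A B (i + d * r) (j + d * s) =
      ∑ m ∈ Finset.range d, matProd (matDecimation d i m A) (matDecimation d m j B) r s := by
  have hsupp : (Function.support (fun t => A (i + d * r) t * B t (j + d * s))).Finite :=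
    (hB (j + d * s)).subset (matProd_support_sub A B _ _)
  exact finsum_split hd _ hsupp

/-- Double indicator sum. -/
lemma double_ite_sum {α β : Type*} [DecidableEq α] [DecidableEq β]
    {S : Finset α} {T : Finset β} {a : α} {b : β} (ha : a ∈ S) (hb : b ∈ T)
    (v : α → β → k) :
    (∑ x ∈ S, ∑ y ∈ T, if x = a ∧ y = b then v x y else 0) = v a b := by
  rw [Finset.sum_eq_single a]
  · rw [Finset.sum_eq_single b]
    · simp
    · intro y _ hy; simp [hy]
    · intro h; exact absurd hb h
  · intro x _ hx
    refine Finset.sum_eq_zero fun y _ => ?_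
    simp [hx]
  · intro h; exact absurd ha h

end Helpers2

section Helpers3

variable {k : Type*} [Field k]

lemma sum_reindex_ite {α β γ : Type*} [DecidableEq α] [DecidableEq β]
    (S : Finset α) (T : Finset β) (U : Finset γ) (φ : γ → α) (ψ : γ → β)
    (hφ : ∀ g ∈ U, φ g ∈ S) (hψ : ∀ g ∈ U, ψ g ∈ T) (w : γ → k) (P : α → β → k) :
    (∑ x ∈ S, ∑ y ∈ T, (∑ g ∈ U, if x = φ g ∧ y = ψ g then w g else 0) * P x y)
      = ∑ g ∈ U, w g * P (φ g) (ψ g) := by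
  calc (∑ x ∈ S, ∑ y ∈ T, (∑ g ∈ U, if x = φ g ∧ y = ψ g then w g else 0) * P x y)
      = ∑ x ∈ S, ∑ y ∈ T, ∑ g ∈ U,
          (if x = φ g ∧ y = ψ g then w g * P x y else 0) := by
        refine Finset.sum_congr rfl fun x _ => Finset.sum_congr rfl fun y _ => ?_
        rw [Finset.sum_mul]
        exact Finset.sum_congr rfl fun g _ => by rw [ite_mul, zero_mul]
    _ = ∑ x ∈ S, ∑ g ∈ U, ∑ y ∈ T,
          (if x = φ g ∧ y = ψ g then w g * P x y else 0) := by
        exact Finset.sum_congr rfl fun x _ => Finset.sum_comm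
    _ = ∑ g ∈ U, ∑ x ∈ S, ∑ y ∈ T,
          (if x = φ g ∧ y = ψ g then w g * P x y else 0) := Finset.sum_comm
    _ = ∑ g ∈ U, w g * P (φ g) (ψ g) :=
        Finset.sum_congr rfl fun g hg =>
          double_ite_sum (hφ g hg) (hψ g hg) (fun x y => w g * P x y)

end Helpers3

section Main

variable {k : Type*} [Field k]

lemma id_colFin : ColumnFinite (fun i j : ℕ => if i = j then (1 : k) else 0) := by
  intro j
  refine (Set.finite_singleton j).subset ?_
  intro i hi
  simp only [Set.mem_setOf_eq] at hi
  simp only [Set.mem_singleton_iff]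
  by_contra h
  exact hi (if_neg h)

lemma id_automatic {d : ℕ} (hd : 0 < d) :
    MatIsAutomatic d (fun i j : ℕ => if i = j then (1 : k) else 0) := by
  refine ⟨{fun i j : ℕ => if i = j then (1 : k) else 0, fun _ _ => (0 : k)},
    (Set.finite_singleton _).insert _, Set.mem_insert _ _, ?_⟩
  intro B hB i hi j hj
  simp only [Set.mem_insert_iff, Set.mem_singleton_iff] at hB ⊢
  rcases hB with hB | hB <;> subst hB
  · by_cases hij : i = j
    · subst hij
      left
      funext r s
      show (if i + d * r = i + d * s then (1 : k) else 0) = if r = s then 1 else 0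
      by_cases hrs : r = s
      · subst hrs; simp
      · rw [if_neg, if_neg hrs]
        intro h
        exact hrs (Nat.eq_of_mul_eq_mul_left hd (Nat.add_left_cancel h))
    · right
      funext r s
      show (if i + d * r = j + d * s then (1 : k) else 0) = 0
      rw [if_neg]
      intro h
      apply hij
      have h2 : (i + d * r) % d = (j + d * s) % d := by rw [h]
      rwa [Nat.add_mul_mod_self_left, Nat.add_mul_mod_self_left,
        Nat.mod_eq_of_lt hi, Nat.mod_eq_of_lt hj] at h2
  · right; rfl

lemma smul_colFin {A : ℕ → ℕ → k} (c : k) (hA : ColumnFinite A) :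
    ColumnFinite (fun i j => c * A i j) := by
  intro j
  refine (hA j).subset ?_
  intro i hi h
  exact hi (by simp only [Set.mem_setOf_eq] at h ⊢; rw [h, mul_zero])

lemma smul_automatic {d : ℕ} {A : ℕ → ℕ → k} (c : k) (hA : MatIsAutomatic d A) :
    MatIsAutomatic d (fun i j => c * A i j) := by
  obtain ⟨S, hSfin, hAS, hSc⟩ := hA
  refine ⟨(fun B => fun i j => c * B i j) '' S, hSfin.image _, ⟨A, hAS, rfl⟩, ?_⟩
  rintro B ⟨B0, hB0, rfl⟩ i hi j hj
  exact ⟨matDecimation d i j B0, hSc B0 hB0 i hi j hj, rfl⟩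

lemma add_colFin {A B : ℕ → ℕ → k} (hA : ColumnFinite A) (hB : ColumnFinite B) :
    ColumnFinite (fun i j => A i j + B i j) := by
  intro j
  refine ((hA j).union (hB j)).subset ?_
  intro i hi
  simp only [Set.mem_setOf_eq] at hi
  by_contra h
  simp only [Set.mem_union, Set.mem_setOf_eq, not_or, not_not] at h
  exact hi (by rw [h.1, h.2, add_zero])

lemma add_automatic {d : ℕ} {A B : ℕ → ℕ → k} (hA : MatIsAutomatic d A)
    (hB : MatIsAutomatic d B) : MatIsAutomatic d (fun i j => A i j + B i j) := by
  obtain ⟨S, hSfin, hAS, hSc⟩ := hA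
  obtain ⟨T, hTfin, hBT, hTc⟩ := hB
  refine ⟨Set.image2 (fun X Y => fun i j => X i j + Y i j) S T,
    hSfin.image2 _ hTfin, ⟨A, hAS, B, hBT, rfl⟩, ?_⟩
  rintro C ⟨X, hX, Y, hY, rfl⟩ i hi j hj
  exact ⟨matDecimation d i j X, hSc X hX i hi j hj,
    matDecimation d i j Y, hTc Y hY i hi j hj, rfl⟩

end Main

section Prod

variable {k : Type*} [Field k] [Fintype k]

lemma prod_automatic {d : ℕ} (hd : 0 < d) {A B : ℕ → ℕ → k}
    (hBc : ColumnFinite B) (hAaut : MatIsAutomatic d A) (hBaut : MatIsAutomatic d B) :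
    MatIsAutomatic d (matProd A B) := by
  classical
  have hFAfin : (matCl d A).Finite := matCl_finite hAaut
  have hFBfin : (matCl d B).Finite := matCl_finite hBaut
  set FA : Finset (ℕ → ℕ → k) := hFAfin.toFinset with hFA
  set FB : Finset (ℕ → ℕ → k) := hFBfin.toFinset with hFB
  set F : ((ℕ → ℕ → k) → (ℕ → ℕ → k) → k) → (ℕ → ℕ → k) :=
    fun c => fun i j => ∑ C ∈ FA, ∑ D ∈ FB, c C D * matProd C D i j with hFdef
  refine ⟨Set.range F, ?_, ?_, ?_⟩
  · -- finiteness
    set G : (↥FA → ↥FB → k) → (ℕ → ℕ → k) :=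
      fun c => fun i j => ∑ C ∈ FA.attach, ∑ D ∈ FB.attach, c C D * matProd ↑C ↑D i j with hG
    refine (Set.finite_range G).subset ?_
    rintro X ⟨c, rfl⟩
    refine ⟨fun C D => c ↑C ↑D, ?_⟩
    funext i j
    show (∑ C ∈ FA.attach, ∑ D ∈ FB.attach, c ↑C ↑D * matProd ↑C ↑D i j) =
      ∑ C ∈ FA, ∑ D ∈ FB, c C D * matProd C D i j
    rw [show (∑ C ∈ FA.attach, ∑ D ∈ FB.attach, c ↑C ↑D * matProd ↑C ↑D i j)
        = ∑ C ∈ FA.attach, ∑ D ∈ FB, c ↑C D * matProd ↑C D i j from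
      Finset.sum_congr rfl fun C _ => Finset.sum_attach FB (fun D => c ↑C D * matProd ↑C D i j)]
    exact Finset.sum_attach FA (fun C => ∑ D ∈ FB, c C D * matProd C D i j)
  · -- membership
    have hAmem : A ∈ FA := hFAfin.mem_toFinset.2 (self_mem_matCl A)
    have hBmem : B ∈ FB := hFBfin.mem_toFinset.2 (self_mem_matCl B)
    refine ⟨fun C D => if C = A ∧ D = B then 1 else 0, ?_⟩
    funext i j
    show (∑ C ∈ FA, ∑ D ∈ FB, (if C = A ∧ D = B then (1:k) else 0) * matProd C D i j)
      = matProd A B i j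
    calc (∑ C ∈ FA, ∑ D ∈ FB, (if C = A ∧ D = B then (1:k) else 0) * matProd C D i j)
        = ∑ C ∈ FA, ∑ D ∈ FB, (if C = A ∧ D = B then matProd C D i j else 0) := by
          refine Finset.sum_congr rfl fun C _ => Finset.sum_congr rfl fun D _ => ?_
          rw [ite_mul, one_mul, zero_mul]
      _ = matProd A B i j := double_ite_sum hAmem hBmem (fun C D => matProd C D i j)
  · -- closure
    rintro X ⟨c, rfl⟩ i hi j hj
    set U : Finset (((ℕ → ℕ → k) × (ℕ → ℕ → k)) × ℕ) := (FA ×ˢ FB) ×ˢ Finset.range d with hU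
    set φ : ((ℕ → ℕ → k) × (ℕ → ℕ → k)) × ℕ → (ℕ → ℕ → k) :=
      fun g => matDecimation d i g.2 g.1.1 with hφ
    set ψ : ((ℕ → ℕ → k) × (ℕ → ℕ → k)) × ℕ → (ℕ → ℕ → k) :=
      fun g => matDecimation d g.2 j g.1.2 with hψ
    set w : ((ℕ → ℕ → k) × (ℕ → ℕ → k)) × ℕ → k := fun g => c g.1.1 g.1.2 with hw
    have hφmem : ∀ g ∈ U, φ g ∈ FA := by
      rintro ⟨⟨C, D⟩, m⟩ hg
      simp only [hU, Finset.mem_product, Finset.mem_range] at hg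
      exact hFAfin.mem_toFinset.2
        (matCl_closed (hFAfin.mem_toFinset.1 hg.1.1) hi hg.2)
    have hψmem : ∀ g ∈ U, ψ g ∈ FB := by
      rintro ⟨⟨C, D⟩, m⟩ hg
      simp only [hU, Finset.mem_product, Finset.mem_range] at hg
      exact hFBfin.mem_toFinset.2
        (matCl_closed (hFBfin.mem_toFinset.1 hg.1.2) hg.2 hj)
    refine ⟨fun C' D' => ∑ g ∈ U, if C' = φ g ∧ D' = ψ g then w g else 0, ?_⟩
    funext r s
    show (∑ C' ∈ FA, ∑ D' ∈ FB,
        (∑ g ∈ U, if C' = φ g ∧ D' = ψ g then w g else 0) * matProd C' D' r s)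
      = matDecimation d i j (F c) r s
    rw [sum_reindex_ite FA FB U φ ψ hφmem hψmem w (fun C' D' => matProd C' D' r s)]
    have hRHS : matDecimation d i j (F c) r s
        = ∑ C ∈ FA, ∑ D ∈ FB, ∑ m ∈ Finset.range d,
            c C D * matProd (matDecimation d i m C) (matDecimation d m j D) r s := by
      show (∑ C ∈ FA, ∑ D ∈ FB, c C D * matProd C D (i + d * r) (j + d * s)) = _
      refine Finset.sum_congr rfl fun C _ => Finset.sum_congr rfl fun D hD => ?_
      have hDc : ColumnFinite D := matCl_colFin hd hBc (hFBfin.mem_toFinset.1 hD)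
      rw [dec_matProd hd hDc i j r s, Finset.mul_sum]
    rw [hRHS, hU, Finset.sum_product, Finset.sum_product]

end Prod

/-- over a finite field `k`, for `d ≥ 2`, the column-finite `d`-automatic
matrices form a `k`-subalgebra of the algebra of column-finite matrices: the set contains
the identity matrix and is closed under scalar multiplication, addition, and matrix
multiplication. -/
theorem automatic_matrices_subalgebra
    (k : Type*) [Field k] [Fintype k] (d : ℕ) (hd : 2 ≤ d) :
    (ColumnFinite (fun i j : ℕ => if i = j then (1 : k) else 0) ∧
      MatIsAutomatic d (fun i j : ℕ => if i = j then (1 : k) else 0)) ∧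
    (∀ (c : k) (A : ℕ → ℕ → k), ColumnFinite A → MatIsAutomatic d A →
      ColumnFinite (fun i j => c * A i j) ∧ MatIsAutomatic d (fun i j => c * A i j)) ∧
    (∀ A B : ℕ → ℕ → k, ColumnFinite A → MatIsAutomatic d A →
      ColumnFinite B → MatIsAutomatic d B →
      (ColumnFinite (fun i j => A i j + B i j) ∧
        MatIsAutomatic d (fun i j => A i j + B i j)) ∧
      (ColumnFinite (matProd A B) ∧ MatIsAutomatic d (matProd A B))) := by
  refine ⟨⟨id_colFin, id_automatic (by omega)⟩, ?_, ?_⟩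
  · intro c A hAc hAaut
    exact ⟨smul_colFin c hAc, smul_automatic c hAaut⟩
  · intro A B hAc hAaut hBc hBaut
    exact ⟨⟨add_colFin hAc hBc, add_automatic hAaut hBaut⟩,
      ⟨matProd_colFin hAc hBc, prod_automatic (by omega) hBc hAaut hBaut⟩⟩
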